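/- Lemma 4.1: Let {S_j}_{j=1}^N be an IFS of contractive similitudes on ℝ^d with augmented tree (X, 𝓔). If (X, 𝓔) is of bounded degree, then S_x ≠ S_y for any two distinct finite words x, y ∈ Σ*. -/

import Mathlib

open Metric Filter

namespace HypIFS

/-- Euclidean space `ℝ^d`. -/
abbrev Euc (d : ℕ) := EuclideanSpace ℝ (Fin d)

/-- The distance `dist(A, B)` between two subsets of a metric space. -/
noncomputable def setDist {E : Type*} [PseudoMetricSpace E] (A B : Set E) : ℝ :=
  sInf (Set.image2 dist A B)

variable {d N : ℕ}

/-- For a word `x = i₁⋯i_k`, the composition `S_x = S_{i₁} ∘ ⋯ ∘ S_{i_k}`. -/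
def sWord (S : Fin N → Euc d → Euc d) : List (Fin N) → Euc d → Euc d :=
  fun w => w.foldr (fun i f => S i ∘ f) id

/-- For a word `x = i₁⋯i_k`, the product `r_x = r_{i₁} ⋯ r_{i_k}` of contraction ratios. -/
def rWord (ρ : Fin N → ℝ) (w : List (Fin N)) : ℝ := (w.map ρ).prod

/-- The coding level `𝓙_n = {i₁⋯i_k : r_{i₁⋯i_k} ≤ rⁿ < r_{i₁⋯i_{k−1}}}`,
with `𝓙_0` consisting of the empty word. -/
def Jlevel (ρ : Fin N → ℝ) (r : ℝ) (n : ℕ) : Set (List (Fin N)) :=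
  if n = 0 then {([] : List (Fin N))}
  else {w | rWord ρ w ≤ r ^ n ∧ r ^ n < rWord ρ w.dropLast}

/-- The vertical (parent–child) edge relation: `x ∈ 𝓙_n` is the initial segment
of `y ∈ 𝓙_{n+1}`. -/
def EV (ρ : Fin N → ℝ) (r : ℝ) (x y : List (Fin N)) : Prop :=
  ∃ n : ℕ, x ∈ Jlevel ρ r n ∧ y ∈ Jlevel ρ r (n + 1) ∧ x <+: y

/-- The horizontal edge relation: `x ≠ y` in the same level `𝓙_n` with
`dist(K_x, K_y) ≤ κ rⁿ`. -/
def EH (S : Fin N → Euc d → Euc d) (ρ : Fin N → ℝ) (r κ : ℝ) (K : Set (Euc d))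
    (x y : List (Fin N)) : Prop :=
  ∃ n : ℕ, x ∈ Jlevel ρ r n ∧ y ∈ Jlevel ρ r n ∧ x ≠ y ∧
    setDist (sWord S x '' K) (sWord S y '' K) ≤ κ * r ^ n

/-- The augmented tree `(X, 𝓔)`, `𝓔 = 𝓔_v ∪ 𝓔_h`, as a graph on the word space
(words belonging to no level `𝓙_n` are isolated vertices). -/
def augIFS (S : Fin N → Euc d → Euc d) (ρ : Fin N → ℝ) (r κ : ℝ) (K : Set (Euc d)) :
    SimpleGraph (List (Fin N)) where
  Adj x y := (EV ρ r x y ∨ EV ρ r y x ∨ EH S ρ r κ K x y ∨ EH S ρ r κ K y x) ∧ x ≠ y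
  symm := ⟨by
    rintro x y ⟨h1 | h2 | h3 | h4, hne⟩
    · exact ⟨Or.inr (Or.inl h1), hne.symm⟩
    · exact ⟨Or.inl h2, hne.symm⟩
    · exact ⟨Or.inr (Or.inr (Or.inr h3)), hne.symm⟩
    · exact ⟨Or.inr (Or.inr (Or.inl h4)), hne.symm⟩⟩
  loopless := ⟨fun x h => h.2 rfl⟩

/-- A graph is of bounded degree if `sup_x deg(x) < ∞`. -/
def BddDeg {V : Type*} (G : SimpleGraph V) : Prop :=
  ∃ M : ℕ, ∀ x : V, {y | G.Adj x y}.Finite ∧ {y | G.Adj x y}.ncard ≤ M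

-- ====== auxiliary lemmas ======

/-- word power -/
def wpow {α : Type*} (l : List α) : ℕ → List α
  | 0 => []
  | n+1 => l ++ wpow l n

lemma wpow_add {α : Type*} (l : List α) (m n : ℕ) :
    wpow l (m + n) = wpow l m ++ wpow l n := by
  induction m with
  | zero => simp [wpow]
  | succ m ih => rw [Nat.succ_add]; simp [wpow, ih]

lemma length_wpow {α : Type*} (l : List α) (n : ℕ) : (wpow l n).length = n * l.length := by
  induction n with
  | zero => simp [wpow]
  | succ n ih => simp [wpow, ih, Nat.succ_mul, Nat.add_comm]

lemma rWord_append (ρ : Fin N → ℝ) (u v : List (Fin N)) :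
    rWord ρ (u ++ v) = rWord ρ u * rWord ρ v := by
  simp [rWord]

lemma rWord_single (ρ : Fin N → ℝ) (j : Fin N) : rWord ρ [j] = ρ j := by
  simp [rWord]

lemma rWord_wpow (ρ : Fin N → ℝ) (l : List (Fin N)) (n : ℕ) :
    rWord ρ (wpow l n) = rWord ρ l ^ n := by
  induction n with
  | zero => simp [wpow, rWord]
  | succ n ih => rw [wpow, rWord_append, ih, pow_succ]; ring

lemma rWord_replicate (ρ : Fin N → ℝ) (j : Fin N) (n : ℕ) :
    rWord ρ (List.replicate n j) = ρ j ^ n := by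
  simp [rWord, List.map_replicate, List.prod_replicate]

lemma rWord_pos (ρ : Fin N → ℝ) (hρ0 : ∀ j, 0 < ρ j) (w : List (Fin N)) :
    0 < rWord ρ w := by
  induction w with
  | nil => simp [rWord]
  | cons j w ih =>
    have : rWord ρ (j :: w) = ρ j * rWord ρ w := by simp [rWord]
    rw [this]; exact mul_pos (hρ0 j) ih

lemma rWord_le_one (ρ : Fin N → ℝ) (hρ0 : ∀ j, 0 < ρ j) (hρ1 : ∀ j, ρ j < 1)
    (w : List (Fin N)) : rWord ρ w ≤ 1 := by
  induction w with
  | nil => simp [rWord]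
  | cons j w ih =>
    have h : rWord ρ (j :: w) = ρ j * rWord ρ w := by simp [rWord]
    rw [h]
    have := rWord_pos ρ hρ0 w
    nlinarith [hρ0 j, hρ1 j]

lemma sWord_append (S : Fin N → Euc d → Euc d) (u v : List (Fin N)) :
    sWord S (u ++ v) = sWord S u ∘ sWord S v := by
  induction u with
  | nil => simp [sWord]
  | cons j u ih =>
    show (S j) ∘ (sWord S (u ++ v)) = (S j ∘ sWord S u) ∘ sWord S v
    rw [ih, Function.comp_assoc]

lemma sWord_wpow (S : Fin N → Euc d → Euc d) (l : List (Fin N)) (n : ℕ) :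
    sWord S (wpow l n) = (sWord S l)^[n] := by
  induction n with
  | zero => simp [wpow, sWord]
  | succ n ih => rw [wpow, sWord_append, ih, Function.iterate_succ']

lemma dist_sWord (S : Fin N → Euc d → Euc d) (ρ : Fin N → ℝ)
    (hsim : ∀ j a b, dist (S j a) (S j b) = ρ j * dist a b)
    (w : List (Fin N)) (a b : Euc d) :
    dist (sWord S w a) (sWord S w b) = rWord ρ w * dist a b := by
  induction w with
  | nil => simp [sWord, rWord]
  | cons j w ih =>
    have h1 : sWord S (j :: w) a = S j (sWord S w a) := rfl
    have h2 : sWord S (j :: w) b = S j (sWord S w b) := rfl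
    have h3 : rWord ρ (j :: w) = ρ j * rWord ρ w := by simp [rWord]
    rw [h1, h2, hsim, ih, h3, mul_assoc]

lemma setDist_self_le {E : Type*} [PseudoMetricSpace E] {A : Set E} (hA : A.Nonempty)
    {c : ℝ} (hc : 0 ≤ c) : setDist A A ≤ c := by
  obtain ⟨a, ha⟩ := hA
  have h0 : (0:ℝ) ∈ Set.image2 dist A A := ⟨a, ha, a, ha, by simp⟩
  have hb : BddBelow (Set.image2 dist A A) := by
    refine ⟨0, ?_⟩
    rintro z ⟨u, -, v, -, rfl⟩
    exact dist_nonneg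
  exact le_trans (csInf_le hb h0) hc

lemma exists_level {r t : ℝ} (hr0 : 0 < r) (hr1 : r < 1) (ht0 : 0 < t) (ht1 : t ≤ 1) :
    ∃ m : ℕ, m ≠ 0 ∧ t * r ≤ r ^ m ∧ r ^ m < t := by
  classical
  have hex : ∃ n : ℕ, r ^ n < t := exists_pow_lt_of_lt_one ht0 hr1
  set n := Nat.find hex with hn_def
  have hn : r ^ n < t := Nat.find_spec hex
  have hn0 : n ≠ 0 := by
    intro h
    rw [h, pow_zero] at hn; linarith
  have hprev : ¬ r ^ (n - 1) < t := Nat.find_min hex (by omega)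
  have hle : t ≤ r ^ (n - 1) := not_lt.1 hprev
  refine ⟨n, hn0, ?_, hn⟩
  calc t * r ≤ r ^ (n - 1) * r := by nlinarith
    _ = r ^ n := by rw [← pow_succ]; congr 1; omega

lemma mem_Jlevel_concat (ρ : Fin N → ℝ) {r : ℝ} {m : ℕ} (hm : m ≠ 0)
    {w : List (Fin N)} {j₀ : Fin N} (hj : ρ j₀ = r)
    (h1 : rWord ρ w * r ≤ r ^ m) (h2 : r ^ m < rWord ρ w) :
    w ++ [j₀] ∈ Jlevel ρ r m := by
  rw [Jlevel, if_neg hm]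
  refine ⟨?_, ?_⟩
  · rw [rWord_append, rWord_single, hj]; exact h1
  · rw [List.dropLast_concat]; exact h2

lemma wpow_mix_ne {α : Type*} {x y : List α} (hxy : x ≠ y) {k s s' : ℕ}
    (hs' : s' ≤ k) (hlt : s < s') :
    wpow x s ++ wpow y (k - s) ≠ wpow x s' ++ wpow y (k - s') := by
  intro h
  obtain ⟨e, rfl⟩ : ∃ e, s' = s + (e + 1) := ⟨s' - s - 1, by omega⟩
  have h1 : wpow x (s + (e + 1)) = wpow x s ++ wpow x (e + 1) := wpow_add x s (e + 1)
  have h2 : wpow y (k - s) = wpow y (e + 1) ++ wpow y (k - (s + (e + 1))) := by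
    rw [← wpow_add]; congr 1; omega
  rw [h1, h2, List.append_assoc] at h
  have h3 : wpow y (e + 1) ++ wpow y (k - (s + (e + 1)))
      = wpow x (e + 1) ++ wpow y (k - (s + (e + 1))) := List.append_cancel_left h
  have h4 : wpow y (e + 1) = wpow x (e + 1) := List.append_cancel_right h3
  have hlen : y.length = x.length := by
    have h5 := congrArg List.length h4
    rw [length_wpow, length_wpow] at h5
    exact Nat.eq_of_mul_eq_mul_left (by omega) h5
  rw [wpow, wpow] at h4
  exact hxy ((List.append_inj h4 hlen).1).symm

lemma wpow_mix_inj {α : Type*} {x y : List α} (hxy : x ≠ y) {k s s' : ℕ}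
    (hs : s ≤ k) (hs' : s' ≤ k)
    (h : wpow x s ++ wpow y (k - s) = wpow x s' ++ wpow y (k - s')) : s = s' := by
  rcases lt_trichotomy s s' with hlt | heq | hlt
  · exact absurd h (wpow_mix_ne hxy hs' hlt)
  · exact heq
  · exact absurd h.symm (wpow_mix_ne hxy hs hlt)

lemma no_bdd_of_family (S : Fin N → Euc d → Euc d) (ρ : Fin N → ℝ) (r κ : ℝ)
    (K : Set (Euc d)) (hκ : 0 < κ) (hr0 : 0 < r) (hKne : K.Nonempty)
    (H : ∀ k : ℕ, ∃ m : ℕ, ∃ v : ℕ → List (Fin N),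
      (∀ s, s ≤ k → v s ∈ Jlevel ρ r m) ∧
      (∀ s s', s ≤ k → s' ≤ k → s ≠ s' → v s ≠ v s') ∧
      (∀ s s', s ≤ k → s' ≤ k → sWord S (v s) = sWord S (v s'))) :
    ¬ BddDeg (augIFS S ρ r κ K) := by
  rintro ⟨M, hM⟩
  obtain ⟨m, v, hmem, hne, heq⟩ := H (M + 1)
  have hadj : ∀ s, 1 ≤ s → s ≤ M + 1 → (augIFS S ρ r κ K).Adj (v 0) (v s) := by
    intro s h1 h2
    have hvne : v 0 ≠ v s := hne 0 s (by omega) h2 (by omega)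
    refine ⟨Or.inr (Or.inr (Or.inl ⟨m, hmem 0 (by omega), hmem s h2, hvne, ?_⟩)), hvne⟩
    rw [heq 0 s (by omega) h2]
    exact setDist_self_le (hKne.image _) (le_of_lt (mul_pos hκ (pow_pos hr0 m)))
  set A : Set (List (Fin N)) := {y | (augIFS S ρ r κ K).Adj (v 0) y} with hA
  have hsub : Set.range (fun i : Fin (M + 1) => v (i.1 + 1)) ⊆ A := by
    rintro w ⟨i, rfl⟩
    exact hadj (i.1 + 1) (by omega) (by omega)
  have hinj : Function.Injective (fun i : Fin (M + 1) => v (i.1 + 1)) := by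
    intro i j hij
    by_contra hij'
    refine hne (i.1 + 1) (j.1 + 1) (by omega) (by omega) ?_ hij
    intro hval
    exact hij' (Fin.val_injective (Nat.succ_injective hval))
  have hcard : (Set.range (fun i : Fin (M + 1) => v (i.1 + 1))).ncard = M + 1 := by
    rw [← Set.image_univ, Set.ncard_image_of_injective _ hinj, Set.ncard_univ,
      Nat.card_eq_fintype_card, Fintype.card_fin]
  have h6 := Set.ncard_le_ncard hsub (hM (v 0)).1
  have h7 : A.ncard ≤ M := (hM (v 0)).2
  rw [hcard] at h6
  omega


lemma replicate_mark_ne {j₀ j₁ : Fin N} (hj : j₁ ≠ j₀) {s s' a a' : ℕ} (hlt : s < s') :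
    List.replicate s j₀ ++ j₁ :: List.replicate a j₀ ≠
      List.replicate s' j₀ ++ j₁ :: List.replicate a' j₀ := by
  intro h
  have h1 : (List.replicate s j₀ ++ j₁ :: List.replicate a j₀)[s]? = some j₁ := by
    rw [List.getElem?_append_right (by simp)]
    simp
  have h2 : (List.replicate s' j₀ ++ j₁ :: List.replicate a' j₀)[s]? = some j₀ := by
    rw [List.getElem?_append]
    simp [List.getElem?_replicate, hlt]
  rw [h, h2] at h1
  exact hj (Option.some.inj h1).symm

/-- Lemma 4.1: if the augmented tree of an IFS of contractive similitudes is of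
bounded degree, then `S_x ≠ S_y` for any two distinct finite words `x, y`. -/
theorem bounded_degree_implies_distinct_maps {d N : ℕ} (hN : 2 ≤ N)
    (S : Fin N → Euc d → Euc d) (ρ : Fin N → ℝ) (r κ : ℝ) (K : Set (Euc d))
    (hρ0 : ∀ j, 0 < ρ j) (hρ1 : ∀ j, ρ j < 1)
    (hsim : ∀ j a b, dist (S j a) (S j b) = ρ j * dist a b)
    (hr : IsLeast (Set.range ρ) r) (hκ : 0 < κ)
    (hKc : IsCompact K) (hKne : K.Nonempty) (hKinv : K = ⋃ j, S j '' K)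
    (hbd : BddDeg (augIFS S ρ r κ K)) :
    ∀ x y : List (Fin N), x ≠ y → sWord S x ≠ sWord S y := by
  intro x y hxyne hS
  obtain ⟨j₀, hj₀⟩ := hr.1
  have hr0 : 0 < r := hj₀ ▸ hρ0 j₀
  have hr1 : r < 1 := hj₀ ▸ hρ1 j₀
  refine no_bdd_of_family S ρ r κ K hκ hr0 hKne ?_ hbd
  rcases Nat.eq_zero_or_pos d with hd | hd
  · -- degenerate case d = 0 : all maps coincide; bounded degree already fails
    subst hd
    haveI hsing : Subsingleton (Euc 0) := ⟨fun a b => PiLp.ext fun i => Fin.elim0 i⟩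
    obtain ⟨j₁, hj₁⟩ := Fintype.exists_ne_of_one_lt_card
      (by rw [Fintype.card_fin]; omega) j₀
    intro k
    have ht0 : 0 < ρ j₁ * r ^ k := mul_pos (hρ0 j₁) (pow_pos hr0 k)
    have ht1 : ρ j₁ * r ^ k ≤ 1 := by
      have h9 : r ^ k ≤ 1 := pow_le_one₀ hr0.le hr1.le
      nlinarith [hρ0 j₁, hρ1 j₁, pow_pos hr0 k]
    obtain ⟨m, hm0, hle, hlt⟩ := exists_level hr0 hr1 ht0 ht1
    have hcore : ∀ s, s ≤ k →
        rWord ρ (List.replicate s j₀ ++ j₁ :: List.replicate (k - s) j₀) = ρ j₁ * r ^ k := by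
      intro s hs
      have h9 : rWord ρ (j₁ :: List.replicate (k - s) j₀) = ρ j₁ * r ^ (k - s) := by
        simp [rWord, List.map_replicate, List.prod_replicate, hj₀]
      rw [rWord_append, rWord_replicate, hj₀, h9, ← mul_assoc, mul_comm (r ^ s) (ρ j₁),
        mul_assoc, ← pow_add]
      congr 2
      omega
    refine ⟨m, fun s => (List.replicate s j₀ ++ j₁ :: List.replicate (k - s) j₀) ++ [j₀],
      ?_, ?_, ?_⟩
    · intro s hs
      exact mem_Jlevel_concat ρ hm0 hj₀ (by rw [hcore s hs]; exact hle)
        (by rw [hcore s hs]; exact hlt)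
    · intro s s' hs hs' hss heq
      have h9 := List.append_cancel_right heq
      rcases Nat.lt_or_ge s s' with h | h
      · exact replicate_mark_ne hj₁ h h9
      · exact replicate_mark_ne hj₁ (by omega) h9.symm
    · intro s s' hs hs'
      exact Subsingleton.elim _ _
  · -- main case d ≥ 1
    have hrxy : rWord ρ x = rWord ρ y := by
      set b : Euc d := EuclideanSpace.single (⟨0, hd⟩ : Fin d) (1 : ℝ) with hbdef
      have hb : dist b 0 = 1 := by
        rw [dist_zero_right, hbdef, EuclideanSpace.norm_single]
        norm_num
      have h1 := dist_sWord S ρ hsim x b 0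
      have h2 := dist_sWord S ρ hsim y b 0
      rw [hS] at h1
      have h3 := h1.symm.trans h2
      rwa [hb, mul_one, mul_one] at h3
    intro k
    have htx0 : 0 < rWord ρ x := rWord_pos ρ hρ0 x
    have ht0 : 0 < rWord ρ x ^ k := pow_pos htx0 k
    have ht1 : rWord ρ x ^ k ≤ 1 := pow_le_one₀ htx0.le (rWord_le_one ρ hρ0 hρ1 x)
    obtain ⟨m, hm0, hle, hlt⟩ := exists_level hr0 hr1 ht0 ht1
    refine ⟨m, fun s => (wpow x s ++ wpow y (k - s)) ++ [j₀], ?_, ?_, ?_⟩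
    · intro s hs
      have hcore : rWord ρ (wpow x s ++ wpow y (k - s)) = rWord ρ x ^ k := by
        rw [rWord_append, rWord_wpow, rWord_wpow, ← hrxy, ← pow_add]
        congr 1
        omega
      exact mem_Jlevel_concat ρ hm0 hj₀ (by rw [hcore]; exact hle)
        (by rw [hcore]; exact hlt)
    · intro s s' hs hs' hss heq
      exact hss (wpow_mix_inj hxyne hs hs' (List.append_cancel_right heq))
    · intro s s' hs hs'
      have hmap : ∀ u, u ≤ k → sWord S (wpow x u ++ wpow y (k - u)) = (sWord S y)^[k] := by
        intro u hu
        have h9 : u + (k - u) = k := by omega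
        rw [sWord_append, sWord_wpow, sWord_wpow, hS, ← Function.iterate_add, h9]
      show sWord S ((wpow x s ++ wpow y (k - s)) ++ [j₀]) =
        sWord S ((wpow x s' ++ wpow y (k - s')) ++ [j₀])
      rw [sWord_append, hmap s hs, sWord_append, hmap s' hs']

end HypIFS
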